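/- arXiv:2001.00715 — 3 statements merged into one kernel-verified Lean document; each statement's English description precedes it below -/
import Mathlib

section
/- Let N ≥ 2 and let L ∈ ℝ^{N×N} satisfy L·1_N = 0, 1_Nᵀ L = 0, and ker L = span{1_N}. Let each f_i : ℝ → ℝ be twice continuously differentiable with f_i''(s) ≥ l > 0 for all s, let f̃(r) = Σᵢ f_i(r_i), and let α, β > 0. If (r, v) ∈ ℝ^N × ℝ^N is an equilibrium of the system ṙ = −α∇f̃(r) − βLr − Lv, v̇ = αβ L r (i.e., α∇f̃(r) + βLr + Lv = 0 and αβ L r = 0), then r = y*·1_N, where y* is the unique solution of Σᵢ f_i'(y) = 0, i.e., the unique minimizer of Σᵢ f_i over ℝ. -/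
/-- any equilibrium `(r, v)` of the optimal signal generator
`ṙ = −α∇f̃(r) − βLr − Lv`, `v̇ = αβLr` satisfies `r = y*·1_N`, where `y*` is the
unique zero of `Σᵢ fᵢ'` (the unique minimizer of `Σᵢ fᵢ`). -/
theorem stmt2 (N : ℕ) (hN : 2 ≤ N)
    (L : Matrix (Fin N) (Fin N) ℝ)
    (hL1 : L.mulVec (fun _ => 1) = 0)
    (h1L : Matrix.vecMul (fun _ => 1) L = 0)
    (hker : ∀ x : Fin N → ℝ, L.mulVec x = 0 → ∃ c : ℝ, x = fun _ => c)
    (f : Fin N → ℝ → ℝ)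
    (hC2 : ∀ i, ContDiff ℝ 2 (f i))
    (l : ℝ) (hl : 0 < l)
    (hdd : ∀ i s, l ≤ iteratedDeriv 2 (f i) s)
    (α β : ℝ) (hα : 0 < α) (hβ : 0 < β)
    (ystar : ℝ) (hystar : ∑ i, deriv (f i) ystar = 0)
    (r v : Fin N → ℝ)
    (heq1 : α • (fun i => deriv (f i) (r i)) + β • L.mulVec r + L.mulVec v = 0)
    (heq2 : (α * β) • L.mulVec r = 0) :
    r = fun _ => ystar := by
  -- From heq2, L r = 0
  have hLr : L.mulVec r = 0 := by
    have h : (α * β) ≠ 0 := by positivity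
    have := smul_eq_zero.mp heq2
    tauto
  obtain ⟨c, hc⟩ := hker r hLr
  -- sum heq1 over i
  have hsum : α * (∑ i, deriv (f i) c) = 0 := by
    have h1 : ∀ i, α * deriv (f i) (r i) + β * L.mulVec r i + L.mulVec v i = 0 := by
      intro i
      have := congrFun heq1 i
      simpa [Pi.add_apply, Pi.smul_apply, smul_eq_mul] using this
    have h2 : ∑ i, (α * deriv (f i) (r i) + β * L.mulVec r i + L.mulVec v i) = 0 := by
      simp [h1]
    have hLv : ∑ i, L.mulVec v i = 0 := by
      have h3 : dotProduct (fun _ => (1:ℝ)) (L.mulVec v) = 0 := by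
        rw [Matrix.dotProduct_mulVec, h1L]; simp [dotProduct]
      simpa [dotProduct] using h3
    rw [Finset.sum_add_distrib, Finset.sum_add_distrib, hLr] at h2
    simp only [Pi.zero_apply, mul_zero, Finset.sum_const_zero, add_zero] at h2
    rw [hLv, add_zero, ← Finset.mul_sum] at h2
    rw [hc] at h2; exact h2
  have hsum' : ∑ i, deriv (f i) c = 0 := by
    have := mul_eq_zero.mp hsum
    rcases this with h | h
    · exact absurd h (ne_of_gt hα)
    · exact h
  -- g = sum of derivatives is strictly mono
  set g : ℝ → ℝ := fun y => ∑ i, deriv (f i) y with hg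
  have hdiff : ∀ i, Differentiable ℝ (deriv (f i)) := by
    intro i
    have h : ContDiff ℝ ((1:ℕ)+1) (f i) := by exact_mod_cast hC2 i
    exact (contDiff_succ_iff_deriv.mp h).2.2.differentiable (by simp)
  have hgmono : StrictMono g := by
    apply strictMono_of_deriv_pos
    intro y
    have hgd : HasDerivAt g (∑ i, deriv (deriv (f i)) y) y := by
      apply HasDerivAt.fun_sum
      intro i _
      exact (hdiff i y).hasDerivAt
    rw [hgd.deriv]
    have : ∀ i : Fin N, l ≤ deriv (deriv (f i)) y := by
      intro i
      have := hdd i y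
      rwa [iteratedDeriv_succ, iteratedDeriv_one] at this
    calc (0:ℝ) < N * l := by positivity
      _ = ∑ _i : Fin N, l := by simp [mul_comm]
      _ ≤ ∑ i, deriv (deriv (f i)) y := Finset.sum_le_sum fun i _ => this i
  have : g c = g ystar := by rw [hg]; simp only []; rw [hsum', hystar]
  have hcy : c = ystar := hgmono.injective this
  rw [hc, hcy]
end

section
/- Let N ≥ 2 and let L ∈ ℝ^{N×N} satisfy L·1_N = 0 and 1_Nᵀ L = 0, and suppose xᵀ((L+Lᵀ)/2)x ≥ λ₂‖x‖² for every x with 1_Nᵀ x = 0, where λ₂ > 0. Let M₁ = (1/√N)·1_N and M₂ ∈ ℝ^{N×(N−1)} with M₂ᵀ M₁ = 0, M₂ᵀ M₂ = I_{N−1}, M₂ M₂ᵀ = I_N − M₁ M₁ᵀ, and put M_L = M₂ᵀ L M₂. Then: (i) L = M₂ M_L M₂ᵀ; (ii) M_L is invertible; (iii) if each f_i : ℝ → ℝ is twice continuously differentiable with f_i'' ≥ l > 0, y* is the unique minimizer of Σᵢ f_i, f̃(r) = Σᵢ f_i(r_i), r* = y*·1_N, and v* = −α M₂ M_L^{−1}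 M₂ᵀ ∇f̃(r*) for any α, β > 0, then (r*, v*) is an equilibrium of ṙ = −α∇f̃(r) − βLr − Lv, v̇ = αβLr, i.e., α∇f̃(r*) + βLr* + Lv* = 0 and L r* = 0. -/
open Matrix

/-- properties of `M_L = M₂ᵀ L M₂`: (i) `L = M₂ M_L M₂ᵀ`;
(ii) `M_L` is invertible; (iii) `(r*, v*)` with `r* = y*·1_N` and
`v* = −α M₂ M_L⁻¹ M₂ᵀ ∇f̃(r*)` is an equilibrium of the optimal signal
generator. -/
theorem stmt3 (N : ℕ) (hN : 2 ≤ N)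
    (L : Matrix (Fin N) (Fin N) ℝ)
    (hL1 : L.mulVec (fun _ => 1) = 0)
    (h1L : Matrix.vecMul (fun _ => 1) L = 0)
    (lam2 : ℝ) (hlam2 : 0 < lam2)
    (hquad : ∀ x : Fin N → ℝ, (∑ i, x i) = 0 →
      lam2 * (∑ i, x i ^ 2) ≤ dotProduct x ((((1 : ℝ) / 2) • (L + Lᵀ)).mulVec x))
    (M₁ : Fin N → ℝ) (hM₁ : M₁ = fun _ => 1 / Real.sqrt N)
    (M₂ : Matrix (Fin N) (Fin (N - 1)) ℝ)
    (hM21 : M₂ᵀ.mulVec M₁ = 0)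
    (hM22 : M₂ᵀ * M₂ = 1)
    (hM23 : M₂ * M₂ᵀ = 1 - Matrix.vecMulVec M₁ M₁)
    (f : Fin N → ℝ → ℝ) (hC2 : ∀ i, ContDiff ℝ 2 (f i))
    (l : ℝ) (hl : 0 < l) (hdd : ∀ i s, l ≤ iteratedDeriv 2 (f i) s)
    (ystar : ℝ) (hystar : ∀ y, ∑ i, f i ystar ≤ ∑ i, f i y)
    (α β : ℝ) (hα : 0 < α) (hβ : 0 < β) :
    L = M₂ * (M₂ᵀ * L * M₂) * M₂ᵀ ∧
    IsUnit (M₂ᵀ * L * M₂) ∧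
    (α • (fun i : Fin N => deriv (f i) ystar)
        + β • L.mulVec (fun _ => ystar)
        + L.mulVec (-α • M₂.mulVec ((M₂ᵀ * L * M₂)⁻¹.mulVec
            (M₂ᵀ.mulVec (fun i => deriv (f i) ystar)))) = 0 ∧
      L.mulVec (fun _ => ystar) = 0) := by

  -- basic scalars
  have hNpos : (0:ℝ) < (N:ℝ) := by
    have : (2:ℝ) ≤ (N:ℝ) := by exact_mod_cast hN
    linarith
  have hsqrt : Real.sqrt N ≠ 0 := by
    positivity
  -- row and column sums of L vanish
  have hrow : ∀ i, ∑ j, L i j = 0 := by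
    intro i
    have := congrFun hL1 i
    simpa [Matrix.mulVec, dotProduct] using this
  have hcol : ∀ j, ∑ i, L i j = 0 := by
    intro j
    have := congrFun h1L j
    simpa [Matrix.vecMul, dotProduct] using this
  set P := Matrix.vecMulVec M₁ M₁ with hPdef
  have hLP : L * P = 0 := by
    ext i j
    simp only [hPdef, Matrix.mul_apply, Matrix.vecMulVec_apply, Matrix.zero_apply, hM₁]
    rw [← Finset.sum_mul, hrow i, zero_mul]
  have hPL : P * L = 0 := by
    ext i j
    simp only [hPdef, Matrix.mul_apply, Matrix.vecMulVec_apply, Matrix.zero_apply, hM₁]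
    rw [← Finset.mul_sum, hcol j, mul_zero]
  set ML := M₂ᵀ * L * M₂ with hMLdef
  -- (i)
  have hi : L = M₂ * ML * M₂ᵀ := by
    have : M₂ * ML * M₂ᵀ = (M₂ * M₂ᵀ) * L * (M₂ * M₂ᵀ) := by
      simp only [hMLdef, Matrix.mul_assoc]
    rw [this, hM23]
    simp [Matrix.sub_mul, Matrix.mul_sub, hLP, hPL, Matrix.mul_assoc]
  -- (ii)
  have hker : ∀ v, ML.mulVec v = 0 → v = 0 := by
    intro v hv
    set x := M₂.mulVec v with hxdef
    have hM1M2 : Matrix.vecMul M₁ M₂ = 0 := by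
      rw [← Matrix.mulVec_transpose]; exact hM21
    have hx1 : dotProduct M₁ x = 0 := by
      rw [hxdef, Matrix.dotProduct_mulVec, hM1M2, zero_dotProduct]
    have hsum : ∑ i, x i = 0 := by
      have h1 : (1 / Real.sqrt N) * ∑ i, x i = 0 := by
        rw [Finset.mul_sum]
        simpa [dotProduct, hM₁] using hx1
      rcases mul_eq_zero.mp h1 with h | h
      · exact absurd h (by positivity)
      · exact h
    have hq := hquad x hsum
    have hLtx : dotProduct x (Lᵀ.mulVec x) = dotProduct x (L.mulVec x) := by
      rw [Matrix.mulVec_transpose, dotProduct_comm, ← Matrix.dotProduct_mulVec]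
    have hxLx : dotProduct x (L.mulVec x) = dotProduct v (ML.mulVec v) := by
      rw [hMLdef, ← Matrix.mulVec_mulVec, ← Matrix.mulVec_mulVec,
        Matrix.dotProduct_mulVec (A := M₂ᵀ), Matrix.vecMul_transpose, hxdef]
    have hrhs : dotProduct x ((((1 : ℝ) / 2) • (L + Lᵀ)).mulVec x) = 0 := by
      rw [Matrix.smul_mulVec, dotProduct_smul, Matrix.add_mulVec,
        dotProduct_add, hLtx, hxLx, hv]
      simp
    have hx0 : x = 0 := by
      have hle : lam2 * ∑ i, x i ^ 2 ≤ 0 := by rw [← hrhs]; exact hq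
      have hge : 0 ≤ ∑ i, x i ^ 2 := Finset.sum_nonneg fun i _ => sq_nonneg _
      have hz : ∑ i, x i ^ 2 = 0 := le_antisymm (by nlinarith) hge
      funext i
      have := (Finset.sum_eq_zero_iff_of_nonneg (fun i _ => sq_nonneg (x i))).mp hz i
        (Finset.mem_univ i)
      exact pow_eq_zero_iff (n := 2) (by norm_num) |>.mp this
    have : M₂ᵀ.mulVec x = v := by
      rw [hxdef, Matrix.mulVec_mulVec, hM22, Matrix.one_mulVec]
    rw [← this, hx0, Matrix.mulVec_zero]
  have hdet : ML.det ≠ 0 := by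
    intro hd
    obtain ⟨v, hv0, hv⟩ := (Matrix.exists_mulVec_eq_zero_iff).mpr hd
    exact hv0 (hker v hv)
  have hUnit : IsUnit ML := (Matrix.isUnit_iff_isUnit_det ML).mpr (isUnit_iff_ne_zero.mpr hdet)
  have hinv : ML * ML⁻¹ = 1 := Matrix.mul_nonsing_inv _ (isUnit_iff_ne_zero.mpr hdet)
  -- (iii)
  set g : Fin N → ℝ := fun i => deriv (f i) ystar with hgdef
  have hdiff : ∀ i, Differentiable ℝ (f i) := fun i => (hC2 i).differentiable (by norm_num)
  have hgsum : ∑ i, g i = 0 := by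
    have hmin : IsLocalMin (fun y => ∑ i, f i y) ystar :=
      Filter.Eventually.mono (Filter.univ_mem) (fun y _ => hystar y)
    have hd0 := hmin.deriv_eq_zero
    rw [deriv_fun_sum (fun i _ => (hdiff i).differentiableAt)] at hd0
    exact hd0
  have hLr : L.mulVec (fun _ => ystar) = 0 := by
    have h1 : (fun _ : Fin N => ystar) = ystar • (fun _ : Fin N => (1:ℝ)) := by
      funext i; simp
    rw [h1, Matrix.mulVec_smul, hL1, smul_zero]
  have hM1g : dotProduct M₁ g = 0 := by
    simp only [dotProduct, hM₁, one_div]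
    rw [← Finset.mul_sum, hgsum, mul_zero]
  have hPg : P.mulVec g = 0 := by
    funext i
    simp only [hPdef, Matrix.mulVec, dotProduct, Matrix.vecMulVec_apply, Pi.zero_apply]
    rw [Finset.sum_congr rfl (fun j _ => mul_assoc (M₁ i) (M₁ j) (g j)), ← Finset.mul_sum]
    have : ∑ j, M₁ j * g j = 0 := hM1g
    rw [this, mul_zero]
  have hLM2 : L * M₂ = M₂ * ML := by
    conv_lhs => rw [hi]
    rw [Matrix.mul_assoc, hM22, Matrix.mul_one]
  have hmat : L * M₂ * (ML⁻¹ * M₂ᵀ) = 1 - P := by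
    rw [hLM2, Matrix.mul_assoc, ← Matrix.mul_assoc ML, hinv, Matrix.one_mul, ← hM23]
  have hLv : L.mulVec (-α • M₂.mulVec (ML⁻¹.mulVec (M₂ᵀ.mulVec g))) = -α • g := by
    have h1 : L.mulVec (M₂.mulVec (ML⁻¹.mulVec (M₂ᵀ.mulVec g))) = g := by
      calc L.mulVec (M₂.mulVec (ML⁻¹.mulVec (M₂ᵀ.mulVec g)))
          = (L * M₂ * (ML⁻¹ * M₂ᵀ)).mulVec g := by
            simp only [Matrix.mulVec_mulVec, Matrix.mul_assoc]
        _ = g := by rw [hmat, Matrix.sub_mulVec, Matrix.one_mulVec, hPg, sub_zero]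
    rw [Matrix.mulVec_smul, h1]
  refine ⟨hi, hUnit, ?_, hLr⟩
  rw [hLr, smul_zero, hLv, add_zero]
  funext i
  simp [neg_smul]
end

section
/- Let 0 < l ≤ l̄ and 0 < λ₂ ≤ λ_N be real numbers, and let α ≥ max{1, 1/l, 2l̄²/(l·λ₂)} and β ≥ max{1, 1/λ₂, 6α²λ_N²/λ₂²}. Then for all real numbers a, b, c ≥ 0: −2αl·a² − 2βλ₂·b² + 2αλ_N·b² + 2λ_N·b·c − (2λ₂/α²)·c² + (2λ_N/α)·b·c + (2l̄/α)·c·a ≤ −(1/2)a² − (λ₂/α²)c². -/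
set_option maxHeartbeats 1000000

/-- the key Young-type inequality chain in the Lyapunov analysis of
the optimal signal generator (Lemma 2). -/
theorem stmt6 (l lb lam2 lamN α β : ℝ)
    (hl : 0 < l) (hllb : l ≤ lb) (hlam2 : 0 < lam2) (hlamN : lam2 ≤ lamN)
    (hα : max 1 (max (1 / l) (2 * lb ^ 2 / (l * lam2))) ≤ α)
    (hβ : max 1 (max (1 / lam2) (6 * α ^ 2 * lamN ^ 2 / lam2 ^ 2)) ≤ β) :
    ∀ a b c : ℝ, 0 ≤ a → 0 ≤ b → 0 ≤ c →
      -2 * α * l * a ^ 2 - 2 * β * lam2 * b ^ 2 + 2 * α * lamN * b ^ 2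
        + 2 * lamN * b * c - (2 * lam2 / α ^ 2) * c ^ 2
        + (2 * lamN / α) * b * c + (2 * lb / α) * c * a
      ≤ -(1 / 2) * a ^ 2 - (lam2 / α ^ 2) * c ^ 2 := by
  intro a b c ha hb hc
  have hα1 : 1 ≤ α := le_trans (le_max_left _ _) hα
  have hα0 : 0 < α := lt_of_lt_of_le one_pos hα1
  have h2 : 1 / l ≤ α := le_trans (le_trans (le_max_left _ _) (le_max_right _ _)) hα
  have h3 : 2 * lb ^ 2 / (l * lam2) ≤ α := le_trans (le_trans (le_max_right _ _) (le_max_right _ _)) hα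
  have hβ1 : 1 ≤ β := le_trans (le_max_left _ _) hβ
  have h6 : 6 * α ^ 2 * lamN ^ 2 / lam2 ^ 2 ≤ β := le_trans (le_trans (le_max_right _ _) (le_max_right _ _)) hβ
  have hαl : 1 ≤ α * l := by rw [div_le_iff₀ hl] at h2; linarith
  have h3' : 2 * lb ^ 2 ≤ α * l * lam2 := by
    rw [div_le_iff₀ (by positivity)] at h3; linarith
  have h6' : 6 * α ^ 2 * lamN ^ 2 ≤ β * lam2 ^ 2 := by
    rw [div_le_iff₀ (by positivity)] at h6; linarith
  have hlb : 0 < lb := lt_of_lt_of_le hl hllb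
  have hlamN0 : 0 < lamN := lt_of_lt_of_le hlam2 hlamN
  have hα2 : (0:ℝ) < α ^ 2 := by positivity
  have hne : α ≠ 0 := ne_of_gt hα0
  -- Young 1
  have e1 : 2 * lb * α * (c * a) ≤ α ^ 3 * l * a ^ 2 + lam2 / 2 * c ^ 2 := by
    rw [← mul_le_mul_iff_of_pos_right (mul_pos hα0 hl)]
    nlinarith [sq_nonneg (α ^ 2 * l * a - lb * c),
      mul_nonneg (sub_nonneg.mpr h3') (sq_nonneg c)]
  -- Young 2
  have e2 : 2 * lamN * α ^ 2 * (b * c) ≤ 2/3 * β * lam2 * α ^ 2 * b ^ 2 + lam2 / 4 * c ^ 2 := by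
    rw [← mul_le_mul_iff_of_pos_right hlam2]
    nlinarith [sq_nonneg (4 * α ^ 2 * lamN * b - lam2 * c),
      mul_nonneg (sub_nonneg.mpr h6') (sq_nonneg b)]
  -- Young 3
  have e3 : 2 * lamN * α * (b * c) ≤ 2/3 * β * lam2 * b ^ 2 + lam2 / 4 * c ^ 2 := by
    rw [← mul_le_mul_iff_of_pos_right hlam2]
    nlinarith [sq_nonneg (4 * α * lamN * b - lam2 * c),
      mul_nonneg (sub_nonneg.mpr h6') (sq_nonneg b), sq_nonneg (α * b), sq_nonneg b,
      mul_nonneg (mul_nonneg (sub_nonneg.mpr hα1) (sub_nonneg.mpr hα1)) (mul_nonneg (sq_nonneg lamN) (sq_nonneg b))]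
  -- coefficient bound: 6 α lamN ≤ β lam2
  have hC0 : 6 * α * lamN ≤ β * lam2 := by
    rw [← mul_le_mul_iff_of_pos_right hlam2]
    have hstep : lam2 ≤ α * lamN := by nlinarith [mul_le_mul_of_nonneg_right hα1 hlamN0.le]
    have h7 := mul_le_mul_of_nonneg_left hstep (by positivity : (0:ℝ) ≤ 6 * α * lamN)
    nlinarith [h6', h7]
  have e4 : 2 * α * lamN * α ^ 2 * b ^ 2 ≤ 1/3 * β * lam2 * α ^ 2 * b ^ 2 := by
    have := mul_le_mul_of_nonneg_right hC0 (mul_nonneg hα2.le (sq_nonneg b))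
    linarith [this]
  have e5 : β * lam2 * b ^ 2 ≤ β * lam2 * α ^ 2 * b ^ 2 := by
    have hb2 : 0 ≤ β * lam2 * b ^ 2 := by positivity
    have h1α2 : 1 ≤ α ^ 2 := by nlinarith
    nlinarith [mul_le_mul_of_nonneg_left h1α2 hb2]
  have e6 : α ^ 2 * a ^ 2 ≤ α ^ 3 * l * a ^ 2 := by
    linarith [mul_le_mul_of_nonneg_right hαl (mul_nonneg hα2.le (sq_nonneg a))]
  have hbb : 0 ≤ β * lam2 * b ^ 2 := by positivity
  have haa : 0 ≤ α ^ 2 * a ^ 2 := by positivity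
  rw [← mul_le_mul_iff_of_pos_left hα2, ← sub_nonneg]
  have expand : α ^ 2 * (-(1 / 2) * a ^ 2 - (lam2 / α ^ 2) * c ^ 2)
      - α ^ 2 * (-2 * α * l * a ^ 2 - 2 * β * lam2 * b ^ 2 + 2 * α * lamN * b ^ 2
        + 2 * lamN * b * c - (2 * lam2 / α ^ 2) * c ^ 2
        + (2 * lamN / α) * b * c + (2 * lb / α) * c * a)
      = (2 * (α ^ 3 * l) * a ^ 2 - 1/2 * (α ^ 2 * a ^ 2))
        + (2 * (β * lam2 * α ^ 2 * b ^ 2) - 2 * α * lamN * α ^ 2 * b ^ 2)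
        + lam2 * c ^ 2 - 2 * lamN * α ^ 2 * (b * c) - 2 * lamN * α * (b * c)
        - 2 * lb * α * (c * a) := by
    field_simp; ring
  rw [expand]
  linarith [e1, e2, e3, e4, e5, e6, hbb, haa]
end
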